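/- Let g : ℝ → [0,1] be measurable with 0 ≤ g ≤ 1, and let -1 < q < p. Define A ≥ 0 by (2/(q+1)) A^{q+1} = ∫_{-∞}^{∞} |t|^q g(t) dt. Then ∫_{-∞}^{∞} |t|^p g(t) dt ≥ (2/(p+1)) A^{p+1}. -/

import Mathlib

open MeasureTheory
open scoped ENNReal

lemma measurable_abs_rpow (r : ℝ) : Measurable fun t : ℝ => |t| ^ r := by
  have heq : (fun t : ℝ => |t| ^ r)
      = fun t => if t = 0 then (0 : ℝ) ^ r else Real.exp (Real.log |t| * r) := by
    funext t
    by_cases ht : t = 0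
    · simp [ht]
    · rw [if_neg ht, Real.rpow_def_of_pos (abs_pos.mpr ht)]
  rw [heq]
  exact Measurable.ite (measurableSet_eq)
    measurable_const (((Real.measurable_log.comp measurable_abs).mul_const r).exp)

lemma lint_Ioc_rpow (r A : ℝ) (hr : -1 < r) (hA : 0 ≤ A) :
    ∫⁻ t in Set.Ioc 0 A, ENNReal.ofReal (t ^ r) = ENNReal.ofReal (A ^ (r + 1) / (r + 1)) := by
  have hi : IntegrableOn (fun t : ℝ => t ^ r) (Set.Ioc 0 A) := by
    have := intervalIntegral.intervalIntegrable_rpow' (a := 0) (b := A) hr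
    rwa [intervalIntegrable_iff, Set.uIoc_of_le hA] at this
  have hnn : 0 ≤ᵐ[volume.restrict (Set.Ioc 0 A)] fun t : ℝ => t ^ r := by
    refine (ae_restrict_iff' measurableSet_Ioc).mpr (Filter.Eventually.of_forall ?_)
    exact fun t ht => Real.rpow_nonneg ht.1.le r
  rw [← ofReal_integral_eq_lintegral_ofReal hi hnn]
  congr 1
  have := integral_rpow (a := 0) (b := A) (Or.inl hr)
  rw [intervalIntegral.integral_of_le hA] at this
  rw [this, Real.zero_rpow (by linarith : r + 1 ≠ 0)]
  ring

lemma lint_Ioc_abs (r A : ℝ) (hr : -1 < r) (hA : 0 ≤ A) :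
    ∫⁻ t in Set.Ioc (-A) A, ENNReal.ofReal (|t| ^ r)
      = ENNReal.ofReal (2 / (r + 1) * A ^ (r + 1)) := by
  have hmeas : Measurable fun t : ℝ => ENNReal.ofReal (|t| ^ r) :=
    (measurable_abs_rpow r).ennreal_ofReal
  have hsplit : Set.Ioc (-A) A = Set.Ioc (-A) 0 ∪ Set.Ioc 0 A := by
    rw [Set.Ioc_union_Ioc_eq_Ioc (by linarith) hA]
  have hpos : ∫⁻ t in Set.Ioc 0 A, ENNReal.ofReal (|t| ^ r)
      = ENNReal.ofReal (A ^ (r + 1) / (r + 1)) := by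
    rw [setLIntegral_congr_fun_ae measurableSet_Ioc
      (Filter.Eventually.of_forall (fun t ht => by rw [abs_of_pos ht.1])),
      lint_Ioc_rpow r A hr hA]
  have hneg : ∫⁻ t in Set.Ioc (-A) 0, ENNReal.ofReal (|t| ^ r)
      = ENNReal.ofReal (A ^ (r + 1) / (r + 1)) := by
    have hemb : MeasurableEmbedding (fun x : ℝ => -x) :=
      (Homeomorph.neg ℝ).measurableEmbedding
    have hmap := setLIntegral_map (μ := (volume : Measure ℝ))
      (s := Set.Ioc (-A) 0) measurableSet_Ioc hmeas hemb.measurable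
    rw [Measure.map_neg_eq_self (volume : Measure ℝ)] at hmap
    have hpre : (fun x : ℝ => -x) ⁻¹' Set.Ioc (-A) 0 = Set.Ico 0 A := by
      ext x
      simp only [Set.mem_preimage, Set.mem_Ioc, Set.mem_Ico]
      constructor <;> intro h <;> constructor <;> linarith [h.1, h.2]
    rw [hmap, hpre]
    simp only [abs_neg]
    rw [setLIntegral_congr (Ico_ae_eq_Ioc (μ := (volume : Measure ℝ)))]
    exact hpos
  rw [hsplit, lintegral_union measurableSet_Ioc (Set.Ioc_disjoint_Ioc_of_le le_rfl),
    hneg, hpos, ← ENNReal.ofReal_add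
      (div_nonneg (Real.rpow_nonneg hA _) (by linarith))
      (div_nonneg (Real.rpow_nonneg hA _) (by linarith))]
  congr 1
  ring

theorem moment_lower_bound
    (g : ℝ → ℝ) (hg : Measurable g) (hg0 : ∀ t, 0 ≤ g t) (hg1 : ∀ t, g t ≤ 1)
    (q p : ℝ) (hq : -1 < q) (hqp : q < p)
    (A : ℝ) (hA : 0 ≤ A)
    (hAq : ∫⁻ t : ℝ, ENNReal.ofReal (|t| ^ q * g t) =
      ENNReal.ofReal (2 / (q + 1) * A ^ (q + 1))) :
    ENNReal.ofReal (2 / (p + 1) * A ^ (p + 1)) ≤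
      ∫⁻ t : ℝ, ENNReal.ofReal (|t| ^ p * g t) := by
  set S : Set ℝ := Set.Ioc (-A) A with hS
  set c : ℝ := A ^ (p - q) with hc
  have hc0 : 0 ≤ c := Real.rpow_nonneg hA _
  have hp : -1 < p := lt_trans hq hqp
  -- measurability
  have hmq : Measurable fun t : ℝ => ENNReal.ofReal (|t| ^ q * g t) :=
    ((measurable_abs_rpow q).mul hg).ennreal_ofReal
  have hmp : Measurable fun t : ℝ => ENNReal.ofReal (|t| ^ p * g t) :=
    ((measurable_abs_rpow p).mul hg).ennreal_ofReal
  have hmiq : Measurable (S.indicator fun t : ℝ => ENNReal.ofReal (c * |t| ^ q)) :=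
    ((measurable_const.mul (measurable_abs_rpow q)).ennreal_ofReal).indicator
      measurableSet_Ioc
  have hmip : Measurable (S.indicator fun t : ℝ => ENNReal.ofReal (|t| ^ p)) :=
    ((measurable_abs_rpow p).ennreal_ofReal).indicator measurableSet_Ioc
  -- pointwise a.e. inequality
  have hptwise : ∀ᵐ t : ℝ,
      ENNReal.ofReal c * ENNReal.ofReal (|t| ^ q * g t)
          + S.indicator (fun t : ℝ => ENNReal.ofReal (|t| ^ p)) t
        ≤ ENNReal.ofReal (|t| ^ p * g t)
          + S.indicator (fun t : ℝ => ENNReal.ofReal (c * |t| ^ q)) t := by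
    have h0 : ∀ᵐ t : ℝ, t ≠ 0 := by
      refine ae_iff.mpr ?_
      simp only [ne_eq, not_not]
      have : {t : ℝ | t = 0} = {0} := by ext; simp
      rw [this]; exact Real.volume_singleton
    filter_upwards [h0] with t ht
    have habs : 0 < |t| := abs_pos.mpr ht
    have hQ : 0 < |t| ^ q := Real.rpow_pos_of_pos habs q
    have hP : 0 < |t| ^ p := Real.rpow_pos_of_pos habs p
    have hPQ : |t| ^ p = |t| ^ q * |t| ^ (p - q) := by
      rw [← Real.rpow_add habs]; ring_nf
    rw [← ENNReal.ofReal_mul hc0]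
    by_cases hmem : t ∈ S
    · have hle : |t| ≤ A := abs_le.mpr ⟨hmem.1.le, hmem.2⟩
      have h1 : |t| ^ (p - q) ≤ c :=
        Real.rpow_le_rpow (abs_nonneg t) hle (by linarith)
      have h2 : |t| ^ p ≤ c * |t| ^ q := by
        rw [hPQ]; nlinarith
      rw [Set.indicator_of_mem hmem, Set.indicator_of_mem hmem,
        ← ENNReal.ofReal_add (mul_nonneg hc0 (mul_nonneg hQ.le (hg0 t))) hP.le,
        ← ENNReal.ofReal_add (mul_nonneg hP.le (hg0 t)) (mul_nonneg hc0 hQ.le)]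
      apply ENNReal.ofReal_le_ofReal
      nlinarith [hg0 t, hg1 t]
    · have hle : A ≤ |t| := by
        rcases le_or_gt t (-A) with h | h
        · exact le_abs.mpr (Or.inr (by linarith))
        · have : A < t := by
            by_contra hcon
            exact hmem ⟨h, not_lt.mp hcon⟩
          exact le_abs.mpr (Or.inl this.le)
      have h1 : c ≤ |t| ^ (p - q) :=
        Real.rpow_le_rpow hA hle (by linarith)
      rw [Set.indicator_of_notMem hmem, Set.indicator_of_notMem hmem, add_zero, add_zero]
      apply ENNReal.ofReal_le_ofReal
      rw [hPQ]
      nlinarith [mul_nonneg (mul_nonneg hQ.le (hg0 t)) (sub_nonneg.mpr h1)]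
  -- integrate
  have hint := lintegral_mono_ae hptwise
  rw [lintegral_add_left ((hmq.const_mul _)) _,
    lintegral_add_left hmp _, lintegral_const_mul _ hmq,
    lintegral_indicator measurableSet_Ioc, lintegral_indicator measurableSet_Ioc] at hint
  have hIq : ∫⁻ t in S, ENNReal.ofReal (c * |t| ^ q)
      = ENNReal.ofReal c * ENNReal.ofReal (2 / (q + 1) * A ^ (q + 1)) := by
    simp_rw [ENNReal.ofReal_mul hc0]
    rw [lintegral_const_mul _ ((measurable_abs_rpow q).ennreal_ofReal),
      lint_Ioc_abs q A hq hA]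
  have hIp : ∫⁻ t in S, ENNReal.ofReal (|t| ^ p)
      = ENNReal.ofReal (2 / (p + 1) * A ^ (p + 1)) := lint_Ioc_abs p A hp hA
  rw [hAq, hIq, hIp] at hint
  have hfin : ENNReal.ofReal c * ENNReal.ofReal (2 / (q + 1) * A ^ (q + 1)) ≠ ⊤ :=
    ENNReal.mul_ne_top ENNReal.ofReal_ne_top ENNReal.ofReal_ne_top
  calc ENNReal.ofReal (2 / (p + 1) * A ^ (p + 1))
      ≤ (∫⁻ t : ℝ, ENNReal.ofReal (|t| ^ p * g t)) := by
        rw [add_comm] at hint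
        exact (ENNReal.add_le_add_iff_right hfin).mp hint
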